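/- Let n ≥ 1 and let v : Fin n → ℝ be a family of real numbers that is linearly independent over ℚ. Let λ be a nonzero real number and suppose that the ℤ-submodule of ℝ generated by λv_1, …, λv_n equals the ℤ-submodule generated by v_1, …, v_n. Then there exists an n×n integer matrix A with determinant ±1 (A ∈ GL_n(ℤ)) such that Σ_j A_{ij} v_j = λ v_i for every i; i.e. v is an eigenvector of A with eigenvalue λ. -/

import Mathlib

/-- If `v : Fin n → ℝ` is linearly independent over `ℚ`, `λ ≠ 0`, and the
ℤ-submodule of ℝ generated by the `λ * v i` equals the one generated by the `v i`, then
there is a matrix `A ∈ GL_n(ℤ)` with `∑ j, A i j * v j = λ * v i` for all `i`. -/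
theorem exists_glnz_eigen (n : ℕ) (hn : 1 ≤ n) (v : Fin n → ℝ)
    (hv : LinearIndependent ℚ v) (lam : ℝ) (hlam : lam ≠ 0)
    (hspan : Submodule.span ℤ (Set.range fun i => lam * v i)
      = Submodule.span ℤ (Set.range v)) :
    ∃ A : Matrix (Fin n) (Fin n) ℤ, IsUnit A.det ∧
      ∀ i, ∑ j, (A i j : ℝ) * v j = lam * v i := by
  classical
  have hmem1 : ∀ i, lam * v i ∈ Submodule.span ℤ (Set.range v) := by
    intro i; rw [← hspan]; exact Submodule.subset_span ⟨i, rfl⟩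
  have hmem2 : ∀ i, v i ∈ Submodule.span ℤ (Set.range fun i => lam * v i) := by
    intro i; rw [hspan]; exact Submodule.subset_span ⟨i, rfl⟩
  choose A hA using fun i => (Submodule.mem_span_range_iff_exists_fun ℤ).mp (hmem1 i)
  choose B hB using fun i => (Submodule.mem_span_range_iff_exists_fun ℤ).mp (hmem2 i)
  simp only [zsmul_eq_mul] at hA hB
  -- key: integer coefficients are unique by ℚ-linear independence
  have key : ∀ c d : Fin n → ℤ,
      (∑ k, (c k : ℝ) * v k = ∑ k, (d k : ℝ) * v k) → c = d := by
    intro c d h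
    have h0 : ∑ k, (((c k - d k : ℤ) : ℚ)) • v k = 0 := by
      simp only [Rat.smul_def]
      push_cast
      simp [sub_mul, Finset.sum_sub_distrib, h]
    have hz := Fintype.linearIndependent_iff.mp hv _ h0
    funext k
    have hk := hz k
    have : ((c k - d k : ℤ) : ℚ) = 0 := hk
    have : (c k - d k : ℤ) = 0 := by exact_mod_cast this
    omega
  have hBA : (Matrix.of B) * (Matrix.of A) = 1 := by
    ext i k
    have hrow : ((Matrix.of B) * (Matrix.of A)) i = (1 : Matrix (Fin n) (Fin n) ℤ) i := by
      apply key
      have lhs : ∑ k, ((((Matrix.of B) * (Matrix.of A)) i k : ℤ) : ℝ) * v k = v i := by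
        simp only [Matrix.mul_apply, Matrix.of_apply]
        push_cast
        simp only [Finset.sum_mul]
        rw [Finset.sum_comm]
        calc ∑ j, ∑ k, ((B i j : ℝ) * (A j k : ℝ)) * v k
            = ∑ j, (B i j : ℝ) * (∑ k, (A j k : ℝ) * v k) := by
              simp [Finset.mul_sum, mul_assoc]
          _ = ∑ j, (B i j : ℝ) * (lam * v j) := by
              refine Finset.sum_congr rfl fun j _ => ?_; rw [hA j]
          _ = v i := hB i
      have rhs : ∑ k, (((1 : Matrix (Fin n) (Fin n) ℤ) i k : ℤ) : ℝ) * v k = v i := by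
        simp [Matrix.one_apply]
      rw [lhs, rhs]
    exact congrFun hrow k
  refine ⟨Matrix.of A, ?_, fun i => hA i⟩
  have hdet : (Matrix.of A).det * (Matrix.of B).det = 1 := by
    rw [mul_comm, ← Matrix.det_mul, hBA, Matrix.det_one]
  exact IsUnit.of_mul_eq_one _ hdet
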